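/- Let w be a positive real number. Then lim_{x→0} ( ζ(1+x) + w^{−x} ζ(1−x) ) = 2γ + log w, where the limit is taken over nonzero complex x tending to 0 (so that the singularities of the two zeta factors at x = 0 cancel). -/

import Mathlib

open Filter

/-- **Cancellation of the zeta poles:** for `w > 0`,
`ζ(1+x) + w^{−x} ζ(1−x) → 2γ + log w` as `x → 0` through nonzero complex values. -/
theorem zeta_pole_cancellation (w : ℝ) (hw : 0 < w) :
    Tendsto (fun x : ℂ =>
        riemannZeta (1 + x) + Complex.exp (-x * (Real.log w : ℂ)) * riemannZeta (1 - x))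
      (nhdsWithin 0 {(0 : ℂ)}ᶜ)
      (nhds ((2 * Real.eulerMascheroniConstant + Real.log w : ℝ) : ℂ)) := by
  set L : ℂ := (Real.log w : ℂ)
  set γ : ℂ := ((Real.eulerMascheroniConstant : ℝ) : ℂ)
  set g : ℂ → ℂ := fun s => riemannZeta s - 1 / (s - 1) with hg
  have hγ : Tendsto g (nhdsWithin 1 {(1 : ℂ)}ᶜ) (nhds γ) := tendsto_riemannZeta_sub_one_div
  -- map x ↦ 1 + x sends 𝓝[≠]0 to 𝓝[≠]1
  have hmap1 : Tendsto (fun x : ℂ => 1 + x) (nhdsWithin 0 {(0 : ℂ)}ᶜ)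
      (nhdsWithin 1 {(1 : ℂ)}ᶜ) := by
    apply Tendsto.mono_left _ (nhdsWithin_mono _ (fun x hx => hx))
    refine tendsto_nhdsWithin_of_tendsto_nhds_of_eventually_within _ ?_ ?_
    · have : Continuous (fun x : ℂ => 1 + x) := by continuity
      simpa using (this.tendsto 0).mono_left nhdsWithin_le_nhds
    · filter_upwards [self_mem_nhdsWithin] with x hx
      simp only [Set.mem_compl_iff, Set.mem_singleton_iff] at hx ⊢
      intro h
      exact hx (by linear_combination h - (1 : ℂ))
  have hmap2 : Tendsto (fun x : ℂ => 1 - x) (nhdsWithin 0 {(0 : ℂ)}ᶜ)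
      (nhdsWithin 1 {(1 : ℂ)}ᶜ) := by
    refine tendsto_nhdsWithin_of_tendsto_nhds_of_eventually_within _ ?_ ?_
    · have : Continuous (fun x : ℂ => 1 - x) := by continuity
      simpa using (this.tendsto 0).mono_left nhdsWithin_le_nhds
    · filter_upwards [self_mem_nhdsWithin] with x hx
      simp only [Set.mem_compl_iff, Set.mem_singleton_iff] at hx ⊢
      intro h
      exact hx (by linear_combination (1 : ℂ) - h)
  have h1 : Tendsto (fun x : ℂ => g (1 + x)) (nhdsWithin 0 {(0 : ℂ)}ᶜ) (nhds γ) :=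
    hγ.comp hmap1
  have h2 : Tendsto (fun x : ℂ => g (1 - x)) (nhdsWithin 0 {(0 : ℂ)}ᶜ) (nhds γ) :=
    hγ.comp hmap2
  have hexp : Tendsto (fun x : ℂ => Complex.exp (-x * L)) (nhdsWithin 0 {(0 : ℂ)}ᶜ)
      (nhds 1) := by
    have : Continuous (fun x : ℂ => Complex.exp (-x * L)) := by continuity
    simpa using (this.tendsto 0).mono_left nhdsWithin_le_nhds
  -- slope of exp(-xL) at 0
  have hderiv : HasDerivAt (fun x : ℂ => Complex.exp (-x * L)) (-L) 0 := by
    have h := (((hasDerivAt_id (0 : ℂ)).neg).mul_const L).cexp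
    simpa using h
  have hslope : Tendsto (fun x : ℂ => (1 - Complex.exp (-x * L)) / x)
      (nhdsWithin 0 {(0 : ℂ)}ᶜ) (nhds L) := by
    have h := hasDerivAt_iff_tendsto_slope.mp hderiv
    have h' : Tendsto (fun x : ℂ => -(slope (fun x : ℂ => Complex.exp (-x * L)) 0 x))
        (nhdsWithin 0 {(0 : ℂ)}ᶜ) (nhds (-(-L))) := h.neg
    rw [neg_neg] at h'
    refine h'.congr' ?_
    filter_upwards [self_mem_nhdsWithin] with x hx
    have hx0 : x ≠ 0 := hx
    rw [slope_def_field]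
    field_simp
    simp only [mul_zero, neg_zero, Complex.exp_zero, sub_zero]
    ring
  have hmain : Tendsto (fun x : ℂ =>
      g (1 + x) + Complex.exp (-x * L) * g (1 - x) + (1 - Complex.exp (-x * L)) / x)
      (nhdsWithin 0 {(0 : ℂ)}ᶜ) (nhds (γ + 1 * γ + L)) :=
    (h1.add (hexp.mul h2)).add hslope
  have heq : (fun x : ℂ =>
      g (1 + x) + Complex.exp (-x * L) * g (1 - x) + (1 - Complex.exp (-x * L)) / x)
      =ᶠ[nhdsWithin 0 {(0 : ℂ)}ᶜ] (fun x : ℂ =>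
        riemannZeta (1 + x) + Complex.exp (-x * L) * riemannZeta (1 - x)) := by
    filter_upwards [self_mem_nhdsWithin] with x hx
    have hx0 : (x : ℂ) ≠ 0 := hx
    simp only [hg]
    have e1 : (1 : ℂ) + x - 1 = x := by ring
    have e2 : (1 : ℂ) - x - 1 = -x := by ring
    rw [e1, e2, div_neg]
    field_simp
    ring
  have := hmain.congr' heq
  convert this using 2
  push_cast
  ring
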